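/- arXiv:1409.5645 — 5 statements merged into one kernel-verified Lean document; each statement's English description precedes it below -/
import Mathlib

section
/- With the definitions in the context, the pointwise identity e⁺ − Λ₊λ₊ n⁺ + (λ₋/2) n⁻ = (w/c_s²)·[ (1 + (1/2)∂_c + Λ ∂_c²) P − Λ₊ (1 + (1/2)∂_c) ∂_c j_c ] holds on ℝ³. (This is the macroscopic form of the expanded Körner free-surface closure relation.) -/
open Matrix

lemma fderiv_sub_const_mul (f g : (Fin 3 → ℝ) → ℝ) (a : ℝ) (x : Fin 3 → ℝ) (c : Fin 3 → ℝ)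
    (hf : ContDiff ℝ (⊤ : ℕ∞) f) (hg : ContDiff ℝ (⊤ : ℕ∞) g) :
    fderiv ℝ (fun y => f y - a * g y) x c = fderiv ℝ f x c - a * fderiv ℝ g x c := by
  have hfd : DifferentiableAt ℝ f x := (hf.differentiable (by simp)).differentiableAt
  have hgd : DifferentiableAt ℝ g x := (hg.differentiable (by simp)).differentiableAt
  rw [fderiv_fun_sub hfd (hgd.const_mul a), fderiv_const_mul hgd a]
  simp

/-- The macroscopic form of the expanded Körner free-surface closure:
`e⁺ − Λ₊λ₊ n⁺ + (λ₋/2) n⁻ = (w/c_s²)[(1 + (1/2)∂_c + Λ∂_c²)P − Λ₊(1 + (1/2)∂_c)∂_c j_c]`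
pointwise on ℝ³. -/
theorem stmt_2 (lp lm : ℝ) (hlp : lp ∈ Set.Ioo (-2 : ℝ) 0) (hlm : lm ∈ Set.Ioo (-2 : ℝ) 0)
    (Lp Lm L : ℝ) (hLp : Lp = -(1/2 + 1/lp)) (hLm : Lm = -(1/2 + 1/lm)) (hL : L = Lp * Lm)
    (c : Fin 3 → ℝ) (w : ℝ) (hw : 0 < w) (cs2 : ℝ) (hcs2 : cs2 = 1/3)
    (P : (Fin 3 → ℝ) → ℝ) (j : (Fin 3 → ℝ) → (Fin 3 → ℝ))
    (hP : ContDiff ℝ (⊤ : ℕ∞) P) (hj : ContDiff ℝ (⊤ : ℕ∞) j)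
    (jc : (Fin 3 → ℝ) → ℝ) (hjc : jc = fun x => c ⬝ᵥ j x)
    (Dc : ((Fin 3 → ℝ) → ℝ) → ((Fin 3 → ℝ) → ℝ))
    (hDc : Dc = fun f x => fderiv ℝ f x c)
    (ep em np nm : (Fin 3 → ℝ) → ℝ)
    (hep : ep = fun x => (w / cs2) * P x)
    (hem : em = fun x => (w / cs2) * jc x)
    (hnp : np = fun x => (1/lp) * (w/cs2) * Dc (fun y => jc y - Lm * Dc P y) x)
    (hnm : nm = fun x => (1/lm) * (w/cs2) * Dc (fun y => P y - Lp * Dc jc y) x) :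
    ∀ x, ep x - Lp * lp * np x + (lm/2) * nm x =
      (w/cs2) * ((P x + (1/2) * Dc P x + L * Dc (Dc P) x)
        - Lp * (Dc jc x + (1/2) * Dc (Dc jc) x)) := by
  have hlp0 : lp ≠ 0 := ne_of_lt hlp.2
  have hlm0 : lm ≠ 0 := ne_of_lt hlm.2
  have hjcd : ContDiff ℝ (⊤ : ℕ∞) jc := by
    rw [hjc]
    simp only [dotProduct]
    exact ContDiff.sum fun i _ => contDiff_const.mul (contDiff_pi.mp hj i)
  have hDcP : ContDiff ℝ (⊤ : ℕ∞) (Dc P) := by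
    rw [hDc]
    exact (hP.fderiv_right (by exact_mod_cast le_top)).clm_apply contDiff_const
  have hDcjc : ContDiff ℝ (⊤ : ℕ∞) (Dc jc) := by
    rw [hDc]
    exact (hjcd.fderiv_right (by exact_mod_cast le_top)).clm_apply contDiff_const
  intro x
  have h1 : Dc (fun y => jc y - Lm * Dc P y) x = Dc jc x - Lm * Dc (Dc P) x := by
    rw [hDc]
    exact fderiv_sub_const_mul jc (fun y => (fun (f : (Fin 3 → ℝ) → ℝ) x => fderiv ℝ f x c) P y)
      Lm x c hjcd (by rw [hDc] at hDcP; exact hDcP)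
  have h2 : Dc (fun y => P y - Lp * Dc jc y) x = Dc P x - Lp * Dc (Dc jc) x := by
    rw [hDc]
    exact fderiv_sub_const_mul P (fun y => (fun (f : (Fin 3 → ℝ) → ℝ) x => fderiv ℝ f x c) jc y)
      Lp x c hP (by rw [hDc] at hDcjc; exact hDcjc)
  subst hL
  rw [hep, hnp, hnm]
  simp only [h1, h2]
  field_simp
  ring
end

section
/- Let P : ℝ³ → ℝ be three times continuously differentiable, c ∈ ℝ³, x ∈ ℝ³, δ ∈ [0,1] and Λ ∈ ℝ, and let ∂_c denote the directional derivative along c. Then, as ε → 0⁺, P(x) + (ε/2) ∂_c P(x) + Λ ε² ∂_c² P(x) − P(x + δ ε c) = (1/2 − δ) ε ∂_c P(x) + (Λ − δ²/2) ε² ∂_c² P(x) + O(ε³). In particular the left-hand side is O(ε) in general, O(ε²) when δ = 1/2, and O(ε³) when δ = 1/2 and Λ = 1/8. (This quantifies that the Körner free-surface rule imposes the pressure boundary value only to first order unless the boundary intersects the lattice link at δ = 1/2.) -/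
open Filter Asymptotics Topology

private lemma pow_isBigO_pow (k m : ℕ) (h : k ≤ m) :
    (fun ε : ℝ => ε ^ m) =O[𝓝[>] (0:ℝ)] fun ε => ε ^ k := by
  rw [isBigO_iff]
  refine ⟨1, ?_⟩
  filter_upwards [Ioc_mem_nhdsGT one_pos] with ε hε
  rw [one_mul, Real.norm_eq_abs, Real.norm_eq_abs, abs_pow, abs_pow]
  exact pow_le_pow_of_le_one (abs_nonneg ε) (by rw [abs_of_pos hε.1]; exact hε.2) h

private lemma const_mul_isBigO (a : ℝ) (f : ℝ → ℝ) (g : ℝ → ℝ)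
    (h : ∀ ε, g ε = a * f ε) : g =O[𝓝[>] (0:ℝ)] f := by
  have := (isBigO_refl f (𝓝[>] (0:ℝ))).const_mul_left a
  exact this.congr_left fun ε => (h ε).symm

/-- For `P : ℝ³ → ℝ` of class `C³`, `δ ∈ [0,1]`, `Λ ∈ ℝ`, as `ε → 0⁺`:
`P(x) + (ε/2)∂_cP(x) + Λε²∂_c²P(x) − P(x + δεc)
  = (1/2 − δ)ε ∂_cP(x) + (Λ − δ²/2)ε² ∂_c²P(x) + O(ε³)`.
In particular the left-hand side is `O(ε)` in general, `O(ε²)` when `δ = 1/2`, and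
`O(ε³)` when `δ = 1/2` and `Λ = 1/8`. -/
theorem stmt_3 (P : (Fin 3 → ℝ) → ℝ) (hP : ContDiff ℝ 3 P)
    (c x : Fin 3 → ℝ) (δ : ℝ) (hδ : δ ∈ Set.Icc (0 : ℝ) 1) (Λ : ℝ)
    (D1 D2 : ℝ) (hD1 : D1 = fderiv ℝ P x c)
    (hD2 : D2 = fderiv ℝ (fun y => fderiv ℝ P y c) x c)
    (F : ℝ → ℝ)
    (hF : F = fun ε => P x + (ε/2) * D1 + Λ * ε^2 * D2 - P (x + (δ * ε) • c)) :
    ((fun ε => F ε - ((1/2 - δ) * ε * D1 + (Λ - δ^2/2) * ε^2 * D2))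
        =O[𝓝[>] (0:ℝ)] fun ε => ε^3) ∧
    (F =O[𝓝[>] (0:ℝ)] fun ε => ε) ∧
    (δ = 1/2 → F =O[𝓝[>] (0:ℝ)] fun ε => ε^2) ∧
    (δ = 1/2 → Λ = 1/8 → F =O[𝓝[>] (0:ℝ)] fun ε => ε^3) := by
  set l : Filter ℝ := 𝓝[>] (0:ℝ) with hl
  set g : ℝ → ℝ := fun t => P (x + t • c) with hgdef
  set G : ℝ → ℝ := fun ε => (1/2 - δ) * ε * D1 + (Λ - δ^2/2) * ε^2 * D2 with hGdef
  -- the line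
  have hL : ∀ t : ℝ, HasDerivAt (fun s : ℝ => x + s • c) c t := by
    intro t
    simpa using ((hasDerivAt_id t).smul_const c).const_add x
  have hx0 : x + (0:ℝ) • c = x := by simp
  -- first derivative of g
  have hgd : ∀ t : ℝ, HasDerivAt g (fderiv ℝ P (x + t • c) c) t := by
    intro t
    exact ((hP.differentiable (by norm_num) (x + t • c)).hasFDerivAt).comp_hasDerivAt t (hL t)
  -- second derivative at 0
  have hQc : ContDiff ℝ 2 (fun y => fderiv ℝ P y c) :=
    (hP.fderiv_right (by norm_num : (2:WithTop ℕ∞) + 1 ≤ 3)).clm_apply contDiff_const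
  have hQd : DifferentiableAt ℝ (fun y => fderiv ℝ P y c) x :=
    (hQc.differentiable (by norm_num)) x
  have hg1D2 : HasDerivAt (fun t : ℝ => fderiv ℝ P (x + t • c) c) D2 0 := by
    have hQf : HasFDerivAt (fun y => fderiv ℝ P y c) (fderiv ℝ (fun y => fderiv ℝ P y c) x)
        (x + (0:ℝ) • c) := by rw [hx0]; exact hQd.hasFDerivAt
    have h := hQf.comp_hasDerivAt 0 (hL 0)
    rw [hD2]
    exact h
  have hderivg : deriv g = fun t => fderiv ℝ P (x + t • c) c :=
    funext fun t => (hgd t).deriv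
  -- Taylor coefficients within Icc 0 1
  have hu : UniqueDiffOn ℝ (Set.Icc (0:ℝ) 1) := uniqueDiffOn_Icc one_pos
  have h0mem : (0:ℝ) ∈ Set.Icc (0:ℝ) 1 := ⟨le_refl 0, zero_le_one⟩
  have hiter1 : iteratedDerivWithin 1 g (Set.Icc (0:ℝ) 1) 0 = D1 := by
    rw [iteratedDerivWithin_one, (hgd 0).differentiableAt.derivWithin (hu 0 h0mem),
      (hgd 0).deriv, hx0, hD1]
  have hiter2 : iteratedDerivWithin 2 g (Set.Icc (0:ℝ) 1) 0 = D2 := by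
    rw [iteratedDerivWithin_succ]
    have hEq : Set.EqOn (iteratedDerivWithin 1 g (Set.Icc (0:ℝ) 1)) (deriv g)
        (Set.Icc (0:ℝ) 1) := by
      intro y hy
      rw [iteratedDerivWithin_one, (hgd y).differentiableAt.derivWithin (hu y hy)]
    rw [derivWithin_congr hEq (hEq h0mem)]
    have hd2 : DifferentiableAt ℝ (deriv g) 0 := by
      rw [hderivg]; exact hg1D2.differentiableAt
    rw [hd2.derivWithin (hu 0 h0mem), hderivg, hg1D2.deriv]
  -- Taylor polynomial
  have htay : ∀ s : ℝ, taylorWithinEval g 2 (Set.Icc (0:ℝ) 1) 0 s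
      = P x + s * D1 + s^2/2 * D2 := by
    intro s
    rw [taylor_within_apply]
    rw [Finset.sum_range_succ, Finset.sum_range_succ, Finset.sum_range_succ,
      Finset.sum_range_zero, hiter1, hiter2, iteratedDerivWithin_zero]
    have hg0 : g 0 = P x := by rw [hgdef]; simp
    rw [hg0]
    simp only [smul_eq_mul, sub_zero, pow_zero, pow_one, Nat.factorial_zero,
      Nat.factorial_one, Nat.factorial_two, Nat.cast_one, Nat.cast_ofNat, inv_one, one_mul,
      mul_one, zero_add]
    ring
  -- remainder bound
  have hgOn : ContDiffOn ℝ 3 g (Set.Icc (0:ℝ) 1) :=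
    (hP.comp (contDiff_const.add (contDiff_id.smul contDiff_const))).contDiffOn
  obtain ⟨C, hC⟩ := exists_taylor_mean_remainder_bound (f := g) (n := 2) zero_le_one hgOn
  have key : ∀ s ∈ Set.Icc (0:ℝ) 1, |g s - (P x + s * D1 + s^2/2 * D2)| ≤ C * s ^ 3 := by
    intro s hs
    have := hC s hs
    rwa [htay s, sub_zero, Real.norm_eq_abs] at this
  -- main big-O estimate
  have hmain : (fun ε => F ε - G ε) =O[l] fun ε => ε ^ 3 := by
    rw [isBigO_iff]
    refine ⟨|C|, ?_⟩
    filter_upwards [Ioc_mem_nhdsGT one_pos] with ε hε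
    have hε0 : 0 < ε := hε.1
    have hδε : δ * ε ∈ Set.Icc (0:ℝ) 1 :=
      ⟨mul_nonneg hδ.1 hε0.le, mul_le_one₀ hδ.2 hε0.le hε.2⟩
    have hb := key (δ * ε) hδε
    have hFG : F ε - G ε = -(g (δ * ε) - (P x + (δ * ε) * D1 + (δ * ε)^2/2 * D2)) := by
      simp only [hF, hGdef, hgdef]
      ring
    have h1 : |F ε - G ε| ≤ C * (δ * ε) ^ 3 := by
      rw [hFG, abs_neg]; exact hb
    have h2 : C * (δ * ε) ^ 3 ≤ |C| * ε ^ 3 := by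
      have hle : (δ * ε) ^ 3 ≤ ε ^ 3 := by
        apply pow_le_pow_left₀ (mul_nonneg hδ.1 hε0.le)
        calc δ * ε ≤ 1 * ε := by nlinarith [hδ.2, hε0.le]
          _ = ε := one_mul ε
      calc C * (δ * ε) ^ 3 ≤ |C| * (δ * ε) ^ 3 := by
            apply mul_le_mul_of_nonneg_right (le_abs_self C) (pow_nonneg (mul_nonneg hδ.1 hε0.le) 3)
        _ ≤ |C| * ε ^ 3 := by
            apply mul_le_mul_of_nonneg_left hle (abs_nonneg C)
    rw [Real.norm_eq_abs, Real.norm_eq_abs, abs_of_pos (pow_pos hε0 3)]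
    exact h1.trans h2
  -- the G part estimates
  have hG1 : (fun ε : ℝ => (1/2 - δ) * ε * D1) =O[l] fun ε => ε :=
    const_mul_isBigO ((1/2 - δ) * D1) _ _ (fun ε => by ring)
  have hG2 : (fun ε : ℝ => (Λ - δ^2/2) * ε^2 * D2) =O[l] fun ε => ε ^ 2 :=
    const_mul_isBigO ((Λ - δ^2/2) * D2) _ _ (fun ε => by ring)
  have hpow21 : (fun ε : ℝ => ε ^ 2) =O[l] fun ε => ε := by
    simpa using pow_isBigO_pow 1 2 one_le_two
  have hpow31 : (fun ε : ℝ => ε ^ 3) =O[l] fun ε => ε := by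
    simpa using pow_isBigO_pow 1 3 (by norm_num)
  have hpow32 : (fun ε : ℝ => ε ^ 3) =O[l] fun ε => ε ^ 2 := pow_isBigO_pow 2 3 (by norm_num)
  have hG : G =O[l] fun ε => ε := hG1.add (hG2.trans hpow21)
  refine ⟨hmain, ?_, ?_, ?_⟩
  · have := (hmain.trans hpow31).add hG
    exact this.congr_left fun ε => by simp
  · intro hδhalf
    subst hδhalf
    have hGsq : G =O[l] fun ε => ε ^ 2 := by
      have hGeq : G = fun ε => (Λ - (1/2:ℝ)^2/2) * ε^2 * D2 := by
        funext ε; simp only [hGdef]; ring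
      rw [hGeq]; exact hG2
    have := (hmain.trans hpow32).add hGsq
    exact this.congr_left fun ε => by simp
  · intro hδhalf hΛ
    subst hδhalf; subst hΛ
    have hGzero : G = fun _ => 0 := by
      funext ε; simp only [hGdef]; ring
    have : F = fun ε => F ε - G ε := by funext ε; rw [hGzero]; simp
    rw [this]; exact hmain
end

section
/- Let λ₊, λ₋ ∈ (−2, 0), α₊ ∈ ℝ, δ ∈ [0,1], and set Λ₊ = −(1/2 + 1/λ₊). Define a₀ = 1 − α₊(1/2 + δ), ā₀ = 1 − α₊/2, a₁ = δα₊ − 1, and C = α₊λ₊(1/2 + δ) − 2λ₊. Then the derived coefficients α₊' = 1 − a₀ − ā₀ − a₁, β₊ = 1 − (1 + λ₊)(a₀ + ā₀) − a₁ − C, α₋ = ā₀ − a₀ − a₁ − 1, and β₋ = (1 + λ₋)ā₀ − (1 + λ₋)a₀ − a₁ − 1 satisfy the matching conditions α₊' = α₊, α₋ = 0, β₋ = α₊ δ λ₋, and β₊ = −α₊ Λ₊ λ₊. -/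
/-- The FSL closure coefficients `a₀ = 1 − α₊(1/2 + δ)`, `abar₀ = 1 − α₊/2`,
`a₁ = δα₊ − 1`, `C = α₊λ₊(1/2 + δ) − 2λ₊` satisfy the second-order matching conditions
`α₊' = α₊`, `α₋ = 0`, `β₋ = α₊δλ₋`, `β₊ = −α₊Λ₊λ₊`. -/
theorem stmt_4 (lp lm : ℝ) (hlp : lp ∈ Set.Ioo (-2 : ℝ) 0) (hlm : lm ∈ Set.Ioo (-2 : ℝ) 0)
    (αp δ : ℝ) (hδ : δ ∈ Set.Icc (0 : ℝ) 1)
    (Lp : ℝ) (hLp : Lp = -(1/2 + 1/lp))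
    (a₀ abar₀ a₁ C : ℝ)
    (ha₀ : a₀ = 1 - αp * (1/2 + δ))
    (habar₀ : abar₀ = 1 - αp / 2)
    (ha₁ : a₁ = δ * αp - 1)
    (hC : C = αp * lp * (1/2 + δ) - 2 * lp)
    (αp' βp αm βm : ℝ)
    (hαp' : αp' = 1 - a₀ - abar₀ - a₁)
    (hβp : βp = 1 - (1 + lp) * (a₀ + abar₀) - a₁ - C)
    (hαm : αm = abar₀ - a₀ - a₁ - 1)
    (hβm : βm = (1 + lm) * abar₀ - (1 + lm) * a₀ - a₁ - 1) :
    αp' = αp ∧ αm = 0 ∧ βm = αp * δ * lm ∧ βp = -αp * Lp * lp := by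
  have hne : lp ≠ 0 := ne_of_lt hlp.2
  subst hLp ha₀ habar₀ ha₁ hC hαp' hβp hαm hβm
  refine ⟨by ring, by ring, by ring, ?_⟩
  field_simp
  ring
end

section
/- With u as defined in the context: for every t > 0 the partial derivative ∂_z u(0, t) exists and equals 0; that is, the series solution satisfies the shear-free (free-surface) condition at z = 0 exactly. -/
open Filter Topology Real

/-- The series solution `u` satisfies the shear-free (free-surface)
condition at `z = 0` exactly: for every `t > 0`, `∂_z u(0,t)` exists and equals `0`. -/
theorem stmt_10 (u_wall h ν : ℝ) (hh : 0 < h) (hν : 0 < ν)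
    (u : ℝ → ℝ → ℝ)
    (hu : ∀ z t, u z t = u_wall *
      (1 - ∑' k : ℕ, 4 * (-1 : ℝ)^k / ((2 * k + 1) * π)
          * Real.exp (-(2 * k + 1)^2 * π^2 * ν * t / (4 * h^2))
          * Real.cos ((2 * k + 1) * π * z / (2 * h)))) :
    ∀ t : ℝ, 0 < t → HasDerivAt (fun z => u z t) 0 0 := by
  intro t ht
  have hπ : 0 < π := Real.pi_pos
  set b : ℝ := π ^ 2 * ν * t / (4 * h ^ 2) with hbdef
  have hbpos : 0 < b := by positivity
  set E : ℕ → ℝ := fun k =>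
    Real.exp (-(2 * (k : ℝ) + 1) ^ 2 * π ^ 2 * ν * t / (4 * h ^ 2)) with hEdef
  have hEpos : ∀ k, 0 < E k := fun k => Real.exp_pos _
  -- summability of E
  have hEsum : Summable E := by
    have hr : Real.exp (-b) < 1 := Real.exp_lt_one_iff.2 (by linarith)
    refine Summable.of_nonneg_of_le (fun k => (hEpos k).le) (fun k => ?_)
      (summable_geometric_of_lt_one (Real.exp_pos (-b)).le hr)
    have : Real.exp (-b) ^ k = Real.exp ((k : ℝ) * (-b)) := by
      rw [← Real.exp_nat_mul]
    rw [this]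
    apply Real.exp_le_exp.2
    have hk : (k : ℝ) ≤ (2 * (k : ℝ) + 1) ^ 2 := by nlinarith [sq_nonneg ((k : ℝ))]
    have : -(2 * (k : ℝ) + 1) ^ 2 * π ^ 2 * ν * t / (4 * h ^ 2)
        = -((2 * (k : ℝ) + 1) ^ 2 * b) := by rw [hbdef]; ring
    rw [this]
    have hb' := hbpos
    nlinarith [mul_le_mul_of_nonneg_right hk hbpos.le]
  set m : ℕ → ℝ := fun k => (2 * (k : ℝ) + 1) * π / (2 * h) with hmdef
  set c : ℕ → ℝ := fun k => 4 * (-1 : ℝ) ^ k / ((2 * (k : ℝ) + 1) * π) with hcdef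
  set f : ℕ → ℝ → ℝ := fun k z => c k * E k * Real.cos (m k * z) with hfdef
  set f' : ℕ → ℝ → ℝ := fun k z => c k * E k * (-Real.sin (m k * z) * m k) with hf'def
  have hcm : ∀ k, c k * m k = 2 * (-1 : ℝ) ^ k / h := by
    intro k
    have h1 : (2 * (k : ℝ) + 1) ≠ 0 := by positivity
    simp only [hcdef, hmdef]; field_simp
    ring
  have hderiv : ∀ k z, HasDerivAt (f k) (f' k z) z := by
    intro k z
    have h1 : HasDerivAt (fun z : ℝ => m k * z) (m k) z := by
      simpa using (hasDerivAt_id z).const_mul (m k)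
    have h2 : HasDerivAt (fun z : ℝ => Real.cos (m k * z))
        (-Real.sin (m k * z) * m k) z := (Real.hasDerivAt_cos (m k * z)).comp z h1
    simpa [hfdef, hf'def, mul_assoc] using h2.const_mul (c k * E k)
  have hbound : ∀ k z, ‖f' k z‖ ≤ 2 / h * E k := by
    intro k z
    have : f' k z = (2 * (-1 : ℝ) ^ k / h) * (E k * -Real.sin (m k * z)) := by
      rw [hf'def]
      linear_combination (E k * -Real.sin (m k * z)) * hcm k
    rw [this]
    rw [Real.norm_eq_abs, abs_mul, abs_div, abs_mul, abs_pow, abs_neg, abs_one,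
      one_pow, mul_one, abs_mul, abs_neg, abs_of_pos hh, abs_of_pos (hEpos k),
      abs_of_pos (by norm_num : (0:ℝ) < 2)]
    calc 2 / h * (E k * |Real.sin (m k * z)|) ≤ 2 / h * (E k * 1) := by
          gcongr
          exact Real.abs_sin_le_one _
      _ = 2 / h * E k := by ring
  have hsum_bd : Summable (fun k => 2 / h * E k) := hEsum.mul_left _
  have hf0 : Summable (fun k => f k 0) := by
    refine Summable.of_norm_bounded (hEsum.mul_left (4 / π)) (fun k => ?_)
    have : f k 0 = c k * E k := by simp [hfdef]
    rw [this, Real.norm_eq_abs, abs_mul]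
    have hc : |c k| ≤ 4 / π := by
      rw [hcdef]
      have h1 : (0:ℝ) < (2 * (k : ℝ) + 1) * π := by positivity
      rw [abs_div, abs_mul, abs_pow, abs_neg, abs_one, one_pow, mul_one,
        abs_of_pos h1, abs_of_pos (by norm_num : (0:ℝ) < 4)]
      rw [div_le_div_iff₀ h1 hπ]
      nlinarith [hπ, Nat.cast_nonneg (α := ℝ) k]
    calc |c k| * |E k| ≤ 4 / π * |E k| := by
          gcongr
      _ = 4 / π * E k := by rw [abs_of_pos (hEpos k)]
  have hS : HasDerivAt (fun z => ∑' k, f k z) (∑' k, f' k 0) 0 :=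
    hasDerivAt_tsum hsum_bd hderiv hbound hf0 0
  have hzero : (∑' k, f' k 0) = 0 := by
    have : ∀ k, f' k 0 = 0 := by intro k; simp [hf'def]
    simp [this]
  rw [hzero] at hS
  have hfun : (fun z => u z t) = fun z => u_wall * (1 - ∑' k, f k z) := by
    funext z
    rw [hu]
    congr 2
    refine tsum_congr fun k => ?_
    rw [hfdef, hcdef, hEdef, hmdef]
    have : (2 * (k : ℝ) + 1) * π * z / (2 * h) = (2 * (k : ℝ) + 1) * π / (2 * h) * z := by
      ring
    rw [this]
  rw [hfun]
  have := ((hasDerivAt_const (0:ℝ) (1:ℝ)).sub hS).const_mul u_wall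
  simpa using this
end

section
/- Let j : ℝ³ → ℝ³ be three times continuously differentiable, c ∈ ℝ³, x ∈ ℝ³, δ ∈ [0,1], Λ₊ ∈ ℝ, write j_c = c·j and let ∂_c denote the directional derivative along c. Then, as ε → 0⁺, Λ₊ ε [ (∂_c j_c)(x) + (ε/2) (∂_c² j_c)(x) ] − Λ₊ ε (∂_c j_c)(x + δ ε c) = Λ₊ (1/2 − δ) ε² (∂_c² j_c)(x) + O(ε³). In particular, the Körner free-surface rule imposes the vanishing-shear condition at the wall point x + δεc to second order (relative to the ε-prefactor) exactly when δ = 1/2, and only to first order otherwise. -/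
open Matrix Filter Asymptotics Topology

/-- For `j : ℝ³ → ℝ³` of class `C³`, `j_c = c·j`, `δ ∈ [0,1]`, as `ε → 0⁺`:
`Λ₊ε[(∂_c j_c)(x) + (ε/2)(∂_c² j_c)(x)] − Λ₊ε(∂_c j_c)(x + δεc)
  = Λ₊(1/2 − δ)ε²(∂_c² j_c)(x) + O(ε³)`.
In particular the Körner rule imposes the vanishing-shear condition at the wall point to
second order relative to the ε-prefactor when `δ = 1/2` (`O(ε³)` total), and to first
order (`O(ε²)` total) in general. -/
theorem stmt_14 (j : (Fin 3 → ℝ) → (Fin 3 → ℝ)) (hj : ContDiff ℝ 3 j)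
    (c x : Fin 3 → ℝ) (δ : ℝ) (hδ : δ ∈ Set.Icc (0 : ℝ) 1) (Lp : ℝ)
    (jc : (Fin 3 → ℝ) → ℝ) (hjc : jc = fun y => c ⬝ᵥ j y)
    (D1 D2 : (Fin 3 → ℝ) → ℝ)
    (hD1 : D1 = fun y => fderiv ℝ jc y c)
    (hD2 : D2 = fun y => fderiv ℝ D1 y c)
    (G : ℝ → ℝ)
    (hG : G = fun ε => Lp * ε * (D1 x + (ε/2) * D2 x) - Lp * ε * D1 (x + (δ * ε) • c)) :
    ((fun ε => G ε - Lp * (1/2 - δ) * ε^2 * D2 x) =O[𝓝[>] (0:ℝ)] fun ε => ε^3) ∧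
    (G =O[𝓝[>] (0:ℝ)] fun ε => ε^2) ∧
    (δ = 1/2 → G =O[𝓝[>] (0:ℝ)] fun ε => ε^3) := by
  obtain ⟨hδ0, hδ1⟩ := hδ
  -- smoothness of jc, D1, D2
  have hjc3 : ContDiff ℝ 3 jc := by
    rw [hjc]
    simp only [dotProduct]
    exact ContDiff.sum fun i _ => contDiff_const.mul (contDiff_pi.mp hj i)
  have hD1c : ContDiff ℝ 2 D1 := by
    rw [hD1]
    exact (hjc3.fderiv_right (m := 2) (by norm_num)).clm_apply contDiff_const
  have hD2c : ContDiff ℝ 1 D2 := by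
    rw [hD2]
    exact (hD1c.fderiv_right (m := 1) (by norm_num)).clm_apply contDiff_const
  set g : ℝ → ℝ := fun t => D1 (x + t • c) with hgdef
  set g2 : ℝ → ℝ := fun t => D2 (x + t • c) with hg2def
  have hline : ∀ t : ℝ, HasDerivAt (fun s : ℝ => x + s • c) c t := by
    intro t
    simpa using ((hasDerivAt_id t).smul_const c).const_add x
  have hgd : ∀ t : ℝ, HasDerivAt g (g2 t) t := by
    intro t
    have hD1d : HasFDerivAt D1 (fderiv ℝ D1 (x + t • c)) (x + t • c) :=
      ((hD1c.differentiable (by norm_num)) (x + t • c)).hasFDerivAt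
    have := hD1d.comp_hasDerivAt t (hline t)
    simpa [hg2def, hD2, hgdef, Function.comp_def] using this
  have hg2d : DifferentiableAt ℝ g2 0 := by
    have hD2d : DifferentiableAt ℝ D2 (x + (0:ℝ) • c) :=
      (hD2c.differentiable (by norm_num)) _
    exact hD2d.comp 0 ((hline 0).differentiableAt)
  -- g2 t - g2 0 = O(t) near 0
  have hO : (fun t : ℝ => g2 t - g2 0) =O[𝓝 (0:ℝ)] fun t => t := by
    simpa using hg2d.isBigO_sub
  obtain ⟨C, hC, hCb⟩ := hO.exists_pos
  rw [isBigOWith_iff] at hCb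
  rw [Metric.eventually_nhds_iff] at hCb
  obtain ⟨r, hr, hrb⟩ := hCb
  -- key estimate: ‖g (δε) - g 0 - δε * g2 0‖ ≤ C ε² for 0 < ε < r
  have key : ∀ ε : ℝ, 0 < ε → ε < r → ‖g (δ * ε) - g 0 - (δ * ε) * g2 0‖ ≤ C * ε ^ 2 := by
    intro ε hε hεr
    set b := δ * ε with hb
    have hb0 : 0 ≤ b := mul_nonneg hδ0 hε.le
    have hbε : b ≤ ε := by
      calc b = δ * ε := rfl
        _ ≤ 1 * ε := by nlinarith
        _ = ε := one_mul ε
    have hbr : b < r := lt_of_le_of_lt hbε hεr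
    have hF : ∀ s ∈ Set.Icc (0:ℝ) b,
        HasDerivWithinAt (fun s => g s - s * g2 0) (g2 s - g2 0) (Set.Icc 0 b) s := by
      intro s _
      have := ((hgd s).sub ((hasDerivAt_id s).mul_const (g2 0))).hasDerivWithinAt (s := Set.Icc 0 b)
      simp only [one_mul] at this
      exact this
    have hbound : ∀ s ∈ Set.Ico (0:ℝ) b, ‖g2 s - g2 0‖ ≤ C * ε := by
      intro s hs
      have hsd : dist s 0 < r := by
        rw [Real.dist_eq, sub_zero, abs_of_nonneg hs.1]
        exact lt_of_lt_of_le hs.2 hbr.le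
      calc ‖g2 s - g2 0‖ ≤ C * ‖s‖ := hrb hsd
        _ ≤ C * ε := by
            apply mul_le_mul_of_nonneg_left _ hC.le
            rw [Real.norm_eq_abs, abs_of_nonneg hs.1]
            exact le_trans hs.2.le hbε
    have hmvt := norm_image_sub_le_of_norm_deriv_le_segment' hF hbound b
      (Set.right_mem_Icc.mpr hb0)
    simp only [zero_mul, sub_zero] at hmvt
    have heq : g b - g 0 - b * g2 0 = g b - b * g2 0 - g 0 := by ring
    rw [heq]
    calc ‖g b - b * g2 0 - g 0‖ ≤ C * ε * b := hmvt
      _ ≤ C * ε * ε := by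
          apply mul_le_mul_of_nonneg_left _ (mul_nonneg hC.le hε.le)
          simpa using hbε
      _ = C * ε ^ 2 := by ring
  have keyO : (fun ε : ℝ => g (δ * ε) - g 0 - (δ * ε) * g2 0) =O[𝓝[>] (0:ℝ)]
      fun ε => ε ^ 2 := by
    rw [isBigO_iff]
    refine ⟨C, ?_⟩
    filter_upwards [Ioo_mem_nhdsGT_of_mem (Set.left_mem_Ico.mpr hr)] with ε hε
    have h1 := key ε hε.1 hε.2
    simpa [Real.norm_eq_abs, abs_of_nonneg (sq_nonneg ε)] using h1
  have hfun : ∀ ε : ℝ, G ε - Lp * (1/2 - δ) * ε^2 * D2 x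
      = (Lp * ε) * -(g (δ * ε) - g 0 - (δ * ε) * g2 0) := by
    intro ε
    simp only [hG, hgdef, hg2def, zero_smul, add_zero]
    ring
  have h1 : (fun ε : ℝ => (Lp * ε) * -(g (δ * ε) - g 0 - (δ * ε) * g2 0))
      =O[𝓝[>] (0:ℝ)] fun ε => ε * ε ^ 2 :=
    ((isBigO_refl (fun ε : ℝ => ε) _).const_mul_left Lp).mul keyO.neg_left
  have first : (fun ε => G ε - Lp * (1/2 - δ) * ε^2 * D2 x) =O[𝓝[>] (0:ℝ)]
      fun ε => ε^3 :=
    h1.congr (fun ε => (hfun ε).symm) (fun ε => by ring)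
  refine ⟨first, ?_, ?_⟩
  · -- G = O(ε²)
    have h32 : (fun ε : ℝ => ε ^ 3) =O[𝓝[>] (0:ℝ)] fun ε => ε ^ 2 := by
      rw [isBigO_iff]
      refine ⟨1, ?_⟩
      filter_upwards [Ioo_mem_nhdsGT_of_mem (Set.left_mem_Ico.mpr one_pos)] with ε hε
      rw [Real.norm_eq_abs, Real.norm_eq_abs, one_mul, abs_of_pos (pow_pos hε.1 3),
        abs_of_pos (pow_pos hε.1 2)]
      nlinarith [hε.1, hε.2]
    have hcorr : (fun ε : ℝ => Lp * (1/2 - δ) * ε^2 * D2 x) =O[𝓝[>] (0:ℝ)]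
        fun ε => ε ^ 2 := by
      have := (isBigO_refl (fun ε : ℝ => ε ^ 2) (𝓝[>] (0:ℝ))).const_mul_left
        (Lp * (1/2 - δ) * D2 x)
      exact this.congr (fun ε => by ring) (fun _ => rfl)
    have := (first.trans h32).add hcorr
    simpa using this
  · intro h
    simpa [h] using first
end
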